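/- Let γ ∈ [0,1), β ∈ (0,1], and let (c_t)_{t≥0} and (ρ_t)_{t≥0} be sequences of nonnegative reals with ρ_0 ≥ β. Set ρ_{-1} := 1, C_{-1} := C_{-2} := 1, C_t := ∏_{u=0}^{t} c_u for t ≥ 0, α_0 := 1 − ρ_0 and α_t := ρ_{t-1} − c_{t-1}·ρ_t for t ≥ 1. If α_t ≥ 0 for all t ≥ 0 and the series ∑_{t=0}^∞ γ^t C_{t-1} ρ_t converges, then ∑_{t=0}^∞ γ^t C_{t-2} α_t ≤ 1 − (1 − γ)·β. -/
import Mathlib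


/-- The coefficients `α_t`: `α_0 = 1 - ρ_0` and `α_t = ρ_{t-1} - c_{t-1} * ρ_t` for
`t ≥ 1`. -/
def vtraceAlpha (c ρ : ℕ → ℝ) : ℕ → ℝ
  | 0 => 1 - ρ 0
  | (t + 1) => ρ t - c t * ρ (t + 1)

/-- with `C_{t-1} = ∏_{u ∈ range t} c_u` and `C_{t-2} = ∏_{u ∈ range (t-1)} c_u`
(conventions `C_{-1} = C_{-2} = 1` handled by ℕ-subtraction), if `ρ_0 ≥ β`, all
`α_t ≥ 0` and `∑ γ^t C_{t-1} ρ_t` converges, then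
`∑ γ^t C_{t-2} α_t ≤ 1 - (1 - γ) * β`. -/
theorem vtrace_alpha_series_le_contraction_const
    (γ : ℝ) (hγ0 : 0 ≤ γ) (hγ1 : γ < 1)
    (β : ℝ) (hβ0 : 0 < β) (hβ1 : β ≤ 1)
    (c ρ : ℕ → ℝ) (hc : ∀ t, 0 ≤ c t) (hρ : ∀ t, 0 ≤ ρ t)
    (hρ0 : β ≤ ρ 0)
    (hα : ∀ t, 0 ≤ vtraceAlpha c ρ t)
    (hsum : Summable fun t : ℕ => γ ^ t * (∏ u ∈ Finset.range t, c u) * ρ t) :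
    ∑' t : ℕ, γ ^ t * (∏ u ∈ Finset.range (t - 1), c u) * vtraceAlpha c ρ t
      ≤ 1 - (1 - γ) * β := by
  set S : ℕ → ℝ := fun t => γ ^ t * (∏ u ∈ Finset.range t, c u) * ρ t with hS
  set f : ℕ → ℝ := fun t => γ ^ t * (∏ u ∈ Finset.range (t - 1), c u) * vtraceAlpha c ρ t
    with hf
  have hSnn : ∀ t, 0 ≤ S t := fun t =>
    mul_nonneg (mul_nonneg (pow_nonneg hγ0 t) (Finset.prod_nonneg fun u _ => hc u)) (hρ t)
  have hfnn : ∀ t, 0 ≤ f t := fun t =>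
    mul_nonneg (mul_nonneg (pow_nonneg hγ0 t) (Finset.prod_nonneg fun u _ => hc u)) (hα t)
  have hstep : ∀ n : ℕ, f (n + 1) = γ * S n - S (n + 1) := by
    intro n
    simp only [hf, hS, vtraceAlpha, Nat.add_sub_cancel, Finset.prod_range_succ]
    ring
  -- partial sums formula
  have hpart : ∀ n : ℕ, ∑ t ∈ Finset.range (n + 1), f t
      = 1 - S n + (γ - 1) * ∑ t ∈ Finset.range n, S t := by
    intro n
    induction n with
    | zero => simp [hf, hS, vtraceAlpha]
    | succ n ih =>
      rw [Finset.sum_range_succ, ih, hstep, Finset.sum_range_succ]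
      ring
  apply Real.tsum_le_of_sum_range_le hfnn
  intro n
  have hbound : (1 - γ) * β ≤ 1 := le_trans
    (mul_le_one₀ (by linarith) hβ0.le hβ1) le_rfl
  match n with
  | 0 => simpa using by linarith
  | (n + 1) =>
    rw [hpart]
    rcases Nat.eq_zero_or_pos n with rfl | hn
    · simp only [Finset.range_zero, Finset.sum_empty, mul_zero, add_zero]
      have : S 0 = ρ 0 := by simp [hS]
      rw [this]
      nlinarith [hρ 0]
    · have h1 : β ≤ ∑ t ∈ Finset.range n, S t := by
        calc β ≤ ρ 0 := hρ0
          _ = S 0 := by simp [hS]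
          _ ≤ ∑ t ∈ Finset.range n, S t :=
            Finset.single_le_sum (fun t _ => hSnn t) (Finset.mem_range.mpr hn)
      have h2 : (γ - 1) * ∑ t ∈ Finset.range n, S t ≤ (γ - 1) * β := by
        apply mul_le_mul_of_nonpos_left h1 (by linarith)
      have := hSnn n
      linarith
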